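/- For every integer m ≥ 0 and every nonzero complex number z, K_m(z) = ∫_0^π e^{z cos w} sin(m w) dw equals (m/z)(e^z + (-1)^m e^{-z}) + (1/z) ∑_{n=1}^{m-1} (2/z)^n ((-1)^n e^z + (-1)^m e^{-z}) ∑_{k=1}^{m-n} C(n+k-1, k-1) ∏_{j=k}^{n+k-1} (m-j). -/

import Mathlib

open MeasureTheory Finset

/-- `K m z = ∫_0^π e^{z cos w} sin(m w) dw`. -/
noncomputable def K (m : ℕ) (z : ℂ) : ℂ :=
  ∫ w in (0:ℝ)..Real.pi, Complex.exp (z * Real.cos w) * Real.sin (m * w)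

noncomputable def Pf (x : ℂ) (k n : ℕ) : ℂ := ∏ i ∈ Finset.range n, (x - k - i)

lemma Pf_zero (x : ℂ) (k : ℕ) : Pf x k 0 = 1 := by simp [Pf]

lemma Pf_last (x : ℂ) (k n : ℕ) : Pf x k (n+1) = Pf x k n * (x - k - n) := by
  simp [Pf, Finset.prod_range_succ]

lemma Pf_first (x : ℂ) (k n : ℕ) : Pf x k (n+1) = (x - k) * Pf (x-1) k n := by
  rw [Pf, Finset.prod_range_succ']
  have h : (∏ i ∈ Finset.range n, (x - k - ((i:ℕ)+1 : ℕ))) = Pf (x-1) k n := by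
    refine Finset.prod_congr rfl (fun i _ => ?_)
    push_cast; ring
  rw [h]; push_cast; ring

lemma Pf_shift (x : ℂ) (k n : ℕ) : Pf x (k+1) n = Pf (x-1) k n := by
  refine Finset.prod_congr rfl (fun i _ => ?_)
  push_cast; ring

lemma Pf_cross (x : ℂ) (k n : ℕ) : (x - k) * Pf (x-1) k n = Pf x k n * (x - k - n) := by
  rw [← Pf_first, Pf_last]

lemma Icc_prod (x : ℂ) (j n : ℕ) :
    ∏ i ∈ Finset.Icc (j+1) (n+j), (x - (i:ℂ)) = Pf x (j+1) n := by
  induction n with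
  | zero => simp [Pf, Finset.Icc_eq_empty_of_lt (Nat.lt_succ_self j)]
  | succ n ih =>
    have h : (n + 1 + j) = (n + j) + 1 := by omega
    rw [h, Finset.prod_Icc_succ_top (by omega), ih, Pf_last]
    push_cast; ring

noncomputable def cc (m n : ℕ) : ℂ :=
  ∑ j ∈ Finset.range m, ((n+j).choose j : ℂ) * Pf (m:ℂ) (j+1) n

noncomputable def hA (m n j : ℕ) : ℂ :=
  ((n:ℂ)+1) * ((n+j).choose (n+1) : ℂ) * Pf ((m:ℂ)+1) (j+1) n
    - ((n+j).choose (n+1) : ℂ) * Pf ((m:ℂ)+2) (j+1) (n+1)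

lemma choose_pascal (n j : ℕ) :
    (n+1+j).choose j = (n+j).choose (n+1) + (n+j).choose j := by
  cases j with
  | zero => simp
  | succ j' =>
    rw [show n+1+(j'+1) = (n+(j'+1))+1 by omega, Nat.choose_succ_succ (n+(j'+1)) j']
    have h1 : (n+(j'+1)).choose j' = (n+(j'+1)).choose (n+1) := by
      rw [← Nat.choose_symm (by omega : j' ≤ n+(j'+1))]
      congr 1
      omega
    rw [h1]

lemma Ept (m n j : ℕ) :
    ((n+1+j).choose j : ℂ) * Pf ((m:ℂ)+2) (j+1) (n+1)
      - ((n+1+j).choose j : ℂ) * Pf (m:ℂ) (j+1) (n+1)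
      - ((m:ℂ)+1) * ((n+j).choose j : ℂ) * Pf ((m:ℂ)+1) (j+1) n
    = hA m n (j+1) - hA m n j := by
  have e2 : ((m:ℂ)+2) - 1 = (m:ℂ)+1 := by ring
  have e1 : ((m:ℂ)+1) - 1 = (m:ℂ) := by ring
  have f1 : Pf ((m:ℂ)+2) (j+1) (n+1) = ((m:ℂ)+1-j) * Pf ((m:ℂ)+1) (j+1) n := by
    rw [Pf_first, e2]; push_cast; ring
  have f2 : Pf (m:ℂ) (j+1) (n+1) = Pf (m:ℂ) (j+1) n * ((m:ℂ) - 1 - j - n) := by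
    rw [Pf_last]; push_cast; ring
  have f3 : ((m:ℂ) - j) * Pf (m:ℂ) (j+1) n
      = Pf ((m:ℂ)+1) (j+1) n * ((m:ℂ) - j - n) := by
    have h := Pf_cross ((m:ℂ)+1) (j+1) n
    rw [e1] at h
    push_cast at h ⊢
    linear_combination h
  have g1 : Pf ((m:ℂ)+1) (j+1+1) n = Pf (m:ℂ) (j+1) n := by
    have h := Pf_shift ((m:ℂ)+1) (j+1) n
    rw [e1] at h; exact h
  have g2 : Pf ((m:ℂ)+2) (j+1+1) (n+1) = Pf ((m:ℂ)+1) (j+1) n * ((m:ℂ) - j - n) := by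
    have h := Pf_shift ((m:ℂ)+2) (j+1) (n+1)
    rw [e2] at h
    rw [h, Pf_last]; push_cast; ring
  have hb1 : ((n+1+j).choose j : ℂ)
      = ((n+j).choose (n+1) : ℂ) + ((n+j).choose j : ℂ) := by
    exact_mod_cast congrArg (Nat.cast : ℕ → ℂ) (choose_pascal n j)
  have hb1' : ((n+(j+1)).choose (n+1) : ℂ)
      = ((n+j).choose (n+1) : ℂ) + ((n+j).choose j : ℂ) := by
    have hs := Nat.choose_symm (show j ≤ n+1+j by omega)
    rw [show n+1+j-j = n+1 by omega] at hs
    have hn : (n+(j+1)).choose (n+1) = (n+j).choose (n+1) + (n+j).choose j := by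
      rw [show n+(j+1) = n+1+j by omega, hs, choose_pascal]
    exact_mod_cast congrArg (Nat.cast : ℕ → ℂ) hn
  have hb3 : ((n+j).choose (n+1) : ℂ) * ((n:ℂ)+1) = ((n+j).choose j : ℂ) * (j:ℂ) := by
    have h := Nat.choose_succ_right_eq (n+j) n
    have h2 : n + j - n = j := by omega
    rw [h2] at h
    have h3 : (n+j).choose n = (n+j).choose j := by
      rw [← Nat.choose_symm (by omega : j ≤ n+j)]; congr 1; omega
    rw [h3] at h
    exact_mod_cast congrArg (Nat.cast : ℕ → ℂ) h
  simp only [hA]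
  rw [f1, f2, g1, g2, hb1, hb1']
  linear_combination (-(((n+j).choose (n+1) : ℂ) + ((n+j).choose j : ℂ))) * f3
    + Pf ((m:ℂ)+1) (j+1) n * hb3

lemma choose_id2 (n j : ℕ) :
    ((n+j).choose (n+1) : ℂ) * ((n:ℂ)+1) = ((n+j).choose j : ℂ) * (j:ℂ) := by
  have h := Nat.choose_succ_right_eq (n+j) n
  have h2 : n + j - n = j := by omega
  rw [h2] at h
  have h3 : (n+j).choose n = (n+j).choose j := by
    rw [← Nat.choose_symm (by omega : j ≤ n+j)]; congr 1; omega
  rw [h3] at h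
  exact_mod_cast congrArg (Nat.cast : ℕ → ℂ) h

lemma cc_rec (m n : ℕ) :
    cc (m+2) (n+1) = cc m (n+1) + ((m:ℂ)+1) * cc (m+1) n := by
  have tsum : ∑ j ∈ Finset.range m,
      (((n+1+j).choose j : ℂ) * Pf ((m:ℂ)+2) (j+1) (n+1)
        - ((n+1+j).choose j : ℂ) * Pf (m:ℂ) (j+1) (n+1)
        - ((m:ℂ)+1) * (((n+j).choose j : ℂ) * Pf ((m:ℂ)+1) (j+1) n))
      = hA m n m - hA m n 0 := by
    rw [← Finset.sum_range_sub (hA m n) m]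
    refine Finset.sum_congr rfl (fun j _ => ?_)
    rw [← mul_assoc]
    exact Ept m n j
  rw [Finset.sum_sub_distrib, Finset.sum_sub_distrib, ← Finset.mul_sum] at tsum
  have hA0 : hA m n 0 = 0 := by simp [hA, Nat.choose_succ_self]
  have b2m : Pf ((m:ℂ)+2) (m+1) (n+1) = Pf ((m:ℂ)+1) (m+1) n := by
    rw [Pf_first]
    have e2 : ((m:ℂ)+2) - 1 = (m:ℂ)+1 := by ring
    have e3 : (m:ℂ)+2 - ((m+1:ℕ):ℂ) = 1 := by push_cast; ring
    rw [e2, e3, one_mul]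
  have b21 : Pf ((m:ℂ)+2) ((m+1)+1) (n+1) = 0 := by
    rw [Pf_first]
    have e3 : (m:ℂ)+2 - (((m+1)+1:ℕ):ℂ) = 0 := by push_cast; ring
    rw [e3, zero_mul]
  have hAm : hA m n m = ((n:ℂ)+1) * ((n+m).choose (n+1) : ℂ) * Pf ((m:ℂ)+1) (m+1) n
      - ((n+m).choose (n+1) : ℂ) * Pf ((m:ℂ)+1) (m+1) n := by
    rw [hA, b2m]
  rw [hAm, hA0] at tsum
  have u2 : cc (m+2) (n+1)
      = (∑ j ∈ Finset.range m, ((n+1+j).choose j : ℂ) * Pf ((m:ℂ)+2) (j+1) (n+1))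
        + ((n+1+m).choose m : ℂ) * Pf ((m:ℂ)+2) (m+1) (n+1)
        + ((n+1+(m+1)).choose (m+1) : ℂ) * Pf ((m:ℂ)+2) ((m+1)+1) (n+1) := by
    unfold cc
    push_cast
    rw [Finset.sum_range_succ, Finset.sum_range_succ]
  rw [b2m, b21, mul_zero, add_zero] at u2
  have u1 : cc (m+1) n
      = (∑ j ∈ Finset.range m, ((n+j).choose j : ℂ) * Pf ((m:ℂ)+1) (j+1) n)
        + ((n+m).choose m : ℂ) * Pf ((m:ℂ)+1) (m+1) n := by
    unfold cc
    push_cast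
    rw [Finset.sum_range_succ]
  have u0 : cc m (n+1) = ∑ j ∈ Finset.range m, ((n+1+j).choose j : ℂ) * Pf (m:ℂ) (j+1) (n+1) := rfl
  have p1 : ((n+1+m).choose m : ℂ) = ((n+m).choose (n+1) : ℂ) + ((n+m).choose m : ℂ) :=
    mod_cast congrArg (Nat.cast : ℕ → ℂ) (choose_pascal n m)
  have p2 := choose_id2 n m
  rw [u2, u1, u0]
  linear_combination tsum + Pf ((m:ℂ)+1) (m+1) n * p1 + Pf ((m:ℂ)+1) (m+1) n * p2

lemma cc_zero (m : ℕ) : cc m 0 = (m:ℂ) := by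
  simp [cc, Pf_zero]

lemma cc_vanish (m n : ℕ) (h : m ≤ n) : cc m n = 0 := by
  unfold cc
  apply Finset.sum_eq_zero
  intro j hj
  rw [Finset.mem_range] at hj
  have hPf : Pf (m:ℂ) (j+1) n = 0 := by
    unfold Pf
    apply Finset.prod_eq_zero (Finset.mem_range.mpr (show m - 1 - j < n by omega))
    rw [show m - 1 - j = m - (j+1) by omega, Nat.cast_sub (by omega : j+1 ≤ m)]
    push_cast
    ring
  rw [hPf, mul_zero]

lemma K_zero (z : ℂ) : K 0 z = 0 := by
  simp [K]

lemma cont_f (z : ℂ) (c : ℝ) :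
    Continuous (fun w : ℝ => Complex.exp (z * Real.cos w) * (Real.sin (c * w) : ℂ)) := by
  fun_prop

lemma K_one (z : ℂ) (hz : z ≠ 0) : K 1 z = (Complex.exp z - Complex.exp (-z)) / z := by
  have hK : K 1 z = ∫ w in (0:ℝ)..Real.pi, Complex.exp (z * Real.cos w) * (Real.sin w : ℂ) := by
    unfold K; norm_num
  have hder : ∀ w ∈ Set.uIcc (0:ℝ) Real.pi,
      HasDerivAt (fun w : ℝ => -Complex.exp (z * Real.cos w) / z)
        (Complex.exp (z * Real.cos w) * (Real.sin w : ℂ)) w := by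
    intro w _
    have h1 : HasDerivAt (fun w : ℝ => z * (Real.cos w : ℂ)) (z * (-Real.sin w : ℝ)) w :=
      ((Real.hasDerivAt_cos w).ofReal_comp).const_mul z
    have h2 := (h1.cexp.neg).div_const z
    refine h2.congr_deriv ?_
    rw [div_eq_iff hz]; push_cast
    ring
  have hint : IntervalIntegrable (fun w : ℝ => Complex.exp (z * Real.cos w) * (Real.sin w : ℂ))
      volume 0 Real.pi := by
    apply Continuous.intervalIntegrable
    fun_prop
  rw [hK, intervalIntegral.integral_eq_sub_of_hasDerivAt hder hint]
  simp [Real.cos_pi, Real.cos_zero]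
  ring

lemma K_rec (m : ℕ) (z : ℂ) :
    -(z/2) * (K (m+2) z - K m z) - ((m:ℂ)+1) * K (m+1) z
      = (-1:ℂ)^(m+1) * Complex.exp (-z) - Complex.exp z := by
  set f' : ℝ → ℂ := fun w => -(z/2) * (Complex.exp (z * Real.cos w) * (Real.sin ((m+2:ℕ) * w) : ℂ))
      + ((z/2) * (Complex.exp (z * Real.cos w) * (Real.sin ((m:ℕ) * w) : ℂ))
        + (-((m:ℂ)+1)) * (Complex.exp (z * Real.cos w) * (Real.sin ((m+1:ℕ) * w) : ℂ))) with hf'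
  have hder : ∀ w ∈ Set.uIcc (0:ℝ) Real.pi,
      HasDerivAt (fun w : ℝ => Complex.exp (z * Real.cos w) * (Real.cos ((m+1:ℕ) * w) : ℂ))
        (f' w) w := by
    intro w _
    have h1 : HasDerivAt (fun w : ℝ => z * (Real.cos w : ℂ)) (z * (-Real.sin w : ℝ)) w :=
      ((Real.hasDerivAt_cos w).ofReal_comp).const_mul z
    have h2 : HasDerivAt (fun w : ℝ => Complex.exp (z * Real.cos w))
        (Complex.exp (z * Real.cos w) * (z * (-Real.sin w : ℝ))) w := h1.cexp
    have h3 : HasDerivAt (fun w : ℝ => (((m:ℝ)+1) * w)) ((m:ℝ)+1) w := by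
      simpa using (hasDerivAt_id w).const_mul ((m:ℝ)+1)
    have h4 : HasDerivAt (fun w : ℝ => (Real.cos (((m:ℝ)+1) * w) : ℂ))
        ((-Real.sin (((m:ℝ)+1) * w) * ((m:ℝ)+1) : ℝ)) w :=
      (((Real.hasDerivAt_cos (((m:ℝ)+1) * w)).comp w h3)).ofReal_comp
    have h5 := h2.mul h4
    have hc : (fun w : ℝ => Complex.exp (z * Real.cos w) * (Real.cos ((m+1:ℕ) * w) : ℂ))
        = (fun w : ℝ => Complex.exp (z * Real.cos w) * (Real.cos (((m:ℝ)+1) * w) : ℂ)) := by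
      push_cast; rfl
    rw [hc]
    refine h5.congr_deriv ?_
    have tr1 : Real.sin ((m+2:ℕ) * w)
        = Real.sin (((m:ℝ)+1)*w) * Real.cos w + Real.cos (((m:ℝ)+1)*w) * Real.sin w := by
      rw [show ((m+2:ℕ):ℝ) * w = ((m:ℝ)+1)*w + w by push_cast; ring, Real.sin_add]
    have tr2 : Real.sin ((m:ℕ) * w)
        = Real.sin (((m:ℝ)+1)*w) * Real.cos w - Real.cos (((m:ℝ)+1)*w) * Real.sin w := by
      rw [show ((m:ℕ):ℝ) * w = ((m:ℝ)+1)*w - w by push_cast; ring, Real.sin_sub]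
    have tr3 : Real.sin ((m+1:ℕ) * w) = Real.sin (((m:ℝ)+1)*w) := by norm_num
    rw [hf']
    simp only [tr1, tr2, tr3]
    push_cast
    ring
  have hint : IntervalIntegrable f' volume 0 Real.pi := by
    apply Continuous.intervalIntegrable
    rw [hf']
    fun_prop
  have hFTC := intervalIntegral.integral_eq_sub_of_hasDerivAt hder hint
  have hsplit : ∫ w in (0:ℝ)..Real.pi, f' w
      = -(z/2) * K (m+2) z + ((z/2) * K m z + (-((m:ℂ)+1)) * K (m+1) z) := by
    rw [hf']
    rw [intervalIntegral.integral_add, intervalIntegral.integral_add,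
      intervalIntegral.integral_const_mul, intervalIntegral.integral_const_mul,
      intervalIntegral.integral_const_mul]
    · rfl
    · exact (Continuous.intervalIntegrable (by fun_prop) _ _)
    · exact (Continuous.intervalIntegrable (by fun_prop) _ _)
    · exact (Continuous.intervalIntegrable (by fun_prop) _ _)
    · exact (Continuous.intervalIntegrable (by fun_prop) _ _)
  rw [hsplit] at hFTC
  have hcos : Real.cos ((m+1:ℕ) * Real.pi) = (-1:ℝ)^(m+1) := by
    have := Real.cos_nat_mul_pi_sub 0 (m+1)
    simpa using this
  rw [hcos] at hFTC
  simp only [Real.cos_pi, Real.cos_zero, mul_zero, Real.cos_zero] at hFTC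
  push_cast at hFTC
  have : z * (-1:ℂ) = -z := by ring
  rw [this] at hFTC
  simp only [mul_one, Nat.cast_mul] at hFTC
  linear_combination hFTC

lemma K_formula (m : ℕ) (z : ℂ) (hz : z ≠ 0) :
    K m z = (1/z) * ∑ n ∈ Finset.range m, (2/z)^n
      * ((-1:ℂ)^n * Complex.exp z + (-1:ℂ)^m * Complex.exp (-z)) * cc m n := by
  induction m using Nat.twoStepInduction with
  | zero => simp [K_zero]
  | one =>
    rw [K_one z hz]
    simp [cc_zero]
    field_simp
    ring
  | more m ih ih1 =>
    have hk := K_rec m z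
    rw [ih, ih1] at hk
    have hp2 : (-1:ℂ)^(m+2) = (-1)^m := by ring
    have hsum : (∑ n ∈ Finset.range (m+2), (2/z)^n
          * ((-1:ℂ)^n * Complex.exp z + (-1:ℂ)^(m+2) * Complex.exp (-z)) * cc (m+2) n)
        = (∑ n ∈ Finset.range m, (2/z)^n
            * ((-1:ℂ)^n * Complex.exp z + (-1:ℂ)^m * Complex.exp (-z)) * cc m n)
          + 2 * (Complex.exp z + (-1:ℂ)^m * Complex.exp (-z))
          - ((m:ℂ)+1) * (2/z) * (∑ n ∈ Finset.range (m+1), (2/z)^n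
            * ((-1:ℂ)^n * Complex.exp z + (-1:ℂ)^(m+1) * Complex.exp (-z)) * cc (m+1) n) := by
      simp only [hp2]
      rw [Finset.sum_range_succ']
      have hstep : ∀ i ∈ Finset.range (m+1),
          (2/z)^(i+1) * ((-1:ℂ)^(i+1) * Complex.exp z + (-1:ℂ)^m * Complex.exp (-z)) * cc (m+2) (i+1)
          = (2/z)^(i+1) * ((-1:ℂ)^(i+1) * Complex.exp z + (-1:ℂ)^m * Complex.exp (-z)) * cc m (i+1)
            + (-(((m:ℂ)+1) * (2/z))) * ((2/z)^i
              * ((-1:ℂ)^i * Complex.exp z + (-1:ℂ)^(m+1) * Complex.exp (-z)) * cc (m+1) i) := by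
        intro i _
        rw [cc_rec m i]
        ring
      rw [Finset.sum_congr rfl hstep, Finset.sum_add_distrib, ← Finset.mul_sum]
      have hext : (∑ i ∈ Finset.range (m+1), (2/z)^(i+1)
            * ((-1:ℂ)^(i+1) * Complex.exp z + (-1:ℂ)^m * Complex.exp (-z)) * cc m (i+1))
          = (∑ n ∈ Finset.range m, (2/z)^n
            * ((-1:ℂ)^n * Complex.exp z + (-1:ℂ)^m * Complex.exp (-z)) * cc m n)
            - (2/z)^0 * ((-1:ℂ)^0 * Complex.exp z + (-1:ℂ)^m * Complex.exp (-z)) * cc m 0 := by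
        rw [eq_sub_iff_add_eq]
        have hb := (Finset.sum_range_succ' (fun n => (2/z)^n
          * ((-1:ℂ)^n * Complex.exp z + (-1:ℂ)^m * Complex.exp (-z)) * cc m n) (m+1)).symm
        refine hb.trans ?_
        rw [Finset.sum_range_succ, Finset.sum_range_succ, cc_vanish m m le_rfl,
          cc_vanish m (m+1) (by omega)]
        simp
      rw [hext, cc_zero, cc_zero]
      push_cast
      ring
    rw [hsum]
    have hz2 : -(z/2) ≠ 0 := by
      simpa using hz
    have hzz : z * (1/z) = 1 := by field_simp
    apply mul_left_cancel₀ hz2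
    linear_combination hk + ((Complex.exp z + (-1:ℂ)^m * Complex.exp (-z))
      - ((m:ℂ)+1) * (1/z) * (∑ n ∈ Finset.range (m+1), (2/z)^n
        * ((-1:ℂ)^n * Complex.exp z + (-1:ℂ)^(m+1) * Complex.exp (-z)) * cc (m+1) n)) * hzz

lemma inner_eq (m n : ℕ) (hn : 1 ≤ n) :
    (∑ k ∈ Finset.Icc 1 (m-n), ((n+k-1).choose (k-1) : ℂ)
      * ∏ j ∈ Finset.Icc k (n+k-1), ((m:ℂ) - (j:ℂ))) = cc m n := by
  have hfull : (∑ k ∈ Finset.Icc 1 m, ((n+k-1).choose (k-1) : ℂ)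
      * ∏ j ∈ Finset.Icc k (n+k-1), ((m:ℂ) - (j:ℂ))) = cc m n := by
    rw [cc, ← Finset.Ico_add_one_right_eq_Icc, Finset.sum_Ico_eq_sum_range]
    rw [show m + 1 - 1 = m by omega]
    refine Finset.sum_congr rfl (fun j _ => ?_)
    rw [show n + (1+j) - 1 = n + j by omega, show (1+j) - 1 = j by omega,
      show 1+j = j+1 by omega, Icc_prod]
  rw [← hfull]
  apply Finset.sum_subset
  · intro k hk
    rw [Finset.mem_Icc] at hk ⊢
    omega
  · intro k hk hnk
    rw [Finset.mem_Icc] at hk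
    rw [Finset.mem_Icc] at hnk
    have hm1 : m ∈ Finset.Icc k (n+k-1) := by
      rw [Finset.mem_Icc]
      omega
    rw [Finset.prod_eq_zero hm1 (by simp), mul_zero]

/-- Explicit formula for `K m z`. -/
theorem K_explicit (m : ℕ) (z : ℂ) (hz : z ≠ 0) :
    K m z = (m / z) * (Complex.exp z + (-1:ℂ)^m * Complex.exp (-z))
      + (1 / z) * ∑ n ∈ Finset.Icc 1 (m - 1), (2 / z)^n *
          ((-1:ℂ)^n * Complex.exp z + (-1:ℂ)^m * Complex.exp (-z)) *
          ∑ k ∈ Finset.Icc 1 (m - n), ((n + k - 1).choose (k - 1) : ℂ) *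
            ∏ j ∈ Finset.Icc k (n + k - 1), ((m:ℂ) - (j:ℂ)) := by
  rcases Nat.eq_zero_or_pos m with hm | hm
  · subst hm
    simp [K_zero]
  · rw [K_formula m z hz, Finset.range_eq_Ico, Finset.sum_eq_sum_Ico_succ_bot hm]
    rw [show Finset.Ico 1 m = Finset.Icc 1 (m-1) by
      rw [← Finset.Ico_add_one_right_eq_Icc]; congr 1; omega]
    rw [cc_zero]
    have hinner : ∀ n ∈ Finset.Icc 1 (m-1),
        (2/z)^n * ((-1:ℂ)^n * Complex.exp z + (-1:ℂ)^m * Complex.exp (-z)) * cc m n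
        = (2/z)^n * ((-1:ℂ)^n * Complex.exp z + (-1:ℂ)^m * Complex.exp (-z))
          * ∑ k ∈ Finset.Icc 1 (m-n), ((n+k-1).choose (k-1) : ℂ)
            * ∏ j ∈ Finset.Icc k (n+k-1), ((m:ℂ) - (j:ℂ)) := by
      intro n hn
      rw [inner_eq m n (Finset.mem_Icc.1 hn).1]
    rw [Finset.sum_congr rfl hinner]
    simp only [pow_zero, one_mul]
    ring
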